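/- Let G be a connected threshold graph with vertices ordered so that deg(v₁) ≥ deg(v₂) ≥ ... ≥ deg(v_n), and let y = (y₁,...,y_n) be the Perron vector of A_α(G) with 0 ≤ α < 1. Then y₁ ≥ y₂ ≥ ... ≥ y_n, and deg(v_i) = deg(v_j) implies y_i = y_j. -/

import Mathlib

open SimpleGraph

/-- The graph `2K₂` on four vertices: two disjoint edges. -/
def twoK2 : SimpleGraph (Fin 4) :=
  SimpleGraph.fromRel (fun a b => (a = 0 ∧ b = 1) ∨ (a = 2 ∧ b = 3))

/-- A graph is a threshold graph if it has no induced subgraph isomorphic to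
`2K₂`, `C₄` or `P₄`.  (Graph embeddings are induced-subgraph embeddings.) -/
def IsThreshold {V : Type} (G : SimpleGraph V) : Prop :=
  IsEmpty (twoK2 ↪g G) ∧ IsEmpty (SimpleGraph.cycleGraph 4 ↪g G) ∧
    IsEmpty (SimpleGraph.pathGraph 4 ↪g G)

open Matrix

noncomputable def Aalpha {n : ℕ} (G : SimpleGraph (Fin n)) (α : ℝ) :
    Matrix (Fin n) (Fin n) ℝ :=
  letI := Classical.decRel G.Adj
  α • Matrix.diagonal (fun v => (G.degree v : ℝ)) + (1 - α) • G.adjMatrix ℝ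

def IsMaxEigenvalue {n : ℕ} (M : Matrix (Fin n) (Fin n) ℝ) (q : ℝ) : Prop :=
  (∃ x : Fin n → ℝ, x ≠ 0 ∧ M.mulVec x = q • x) ∧
  ∀ (μ : ℝ) (x : Fin n → ℝ), x ≠ 0 → M.mulVec x = μ • x → μ ≤ q

noncomputable def deg {n : ℕ} (G : SimpleGraph (Fin n)) (v : Fin n) : ℕ :=
  letI := Classical.decRel G.Adj
  G.degree v

lemma emb_of_four {n : ℕ} (G : SimpleGraph (Fin n)) (H : SimpleGraph (Fin 4))
    (v : Fin 4 → Fin n) (hinj : Function.Injective v)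
    (hadj : ∀ a b, G.Adj (v a) (v b) ↔ H.Adj a b) : Nonempty (H ↪g G) :=
  ⟨⟨⟨v, hinj⟩, fun {a b} => hadj a b⟩⟩

set_option linter.unreachableTactic false in
set_option linter.unusedTactic false in
lemma comparable {n : ℕ} (G : SimpleGraph (Fin n)) (hth : IsThreshold G)
    (i j : Fin n) :
    (∀ k, G.Adj i k → k ≠ j → G.Adj j k) ∨ (∀ k, G.Adj j k → k ≠ i → G.Adj i k) := by
  by_contra hc
  push_neg at hc
  obtain ⟨⟨a, hia, haj, hja⟩, ⟨b, hjb, hbi, hib⟩⟩ := hc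
  have hai : a ≠ i := fun h => G.irrefl (h ▸ hia)
  have hbj : b ≠ j := fun h => G.irrefl (h ▸ hjb)
  have hab : a ≠ b := fun h => hib (h ▸ hia)
  have hij : i ≠ j := fun h => hja (h ▸ hia)
  have hji : ¬ G.Adj j a := hja
  have hibn : ¬ G.Adj i b := hib
  by_cases hij' : G.Adj i j <;> by_cases hab' : G.Adj a b
  · -- C4 : a - i - j - b - a
    refine hth.2.1.elim ?_
    refine Nonempty.some (emb_of_four G _ ![a, i, j, b] ?_ ?_)
    · intro x y
      fin_cases x <;> fin_cases y <;>
        simp_all [Fin.ext_iff] <;> omega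
    · intro x y
      fin_cases x <;> fin_cases y <;>
        simp [cycleGraph_adj] <;>
        first
          | exact hia.symm | exact hia | exact hij' | exact hij'.symm
          | exact hjb | exact hjb.symm | exact hab' | exact hab'.symm
          | decide
          | (simp_all [G.adj_comm] <;> decide)
  · -- P4 : a - i - j - b
    refine hth.2.2.elim ?_
    refine Nonempty.some (emb_of_four G _ ![a, i, j, b] ?_ ?_)
    · intro x y
      fin_cases x <;> fin_cases y <;> simp_all [Fin.ext_iff] <;> omega
    · intro x y
      fin_cases x <;> fin_cases y <;>
        simp [pathGraph_adj] <;>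
        first
          | exact hia.symm | exact hia | exact hij' | exact hij'.symm
          | exact hjb | exact hjb.symm
          | decide
          | (simp_all [G.adj_comm] <;> decide)
  · -- P4 : i - a - b - j
    refine hth.2.2.elim ?_
    refine Nonempty.some (emb_of_four G _ ![i, a, b, j] ?_ ?_)
    · intro x y
      fin_cases x <;> fin_cases y <;> simp_all [Fin.ext_iff] <;> omega
    · intro x y
      fin_cases x <;> fin_cases y <;>
        simp [pathGraph_adj] <;>
        first
          | exact hia | exact hia.symm | exact hab' | exact hab'.symm
          | exact hjb.symm | exact hjb
          | decide
          | (simp_all [G.adj_comm] <;> decide)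
  · -- 2K2 : i-a , j-b
    refine hth.1.elim ?_
    refine Nonempty.some (emb_of_four G _ ![i, a, j, b] ?_ ?_)
    · intro x y
      fin_cases x <;> fin_cases y <;> simp_all [Fin.ext_iff] <;> omega
    · intro x y
      fin_cases x <;> fin_cases y <;>
        simp [twoK2, fromRel_adj] <;>
        first
          | exact hia | exact hia.symm | exact hjb | exact hjb.symm
          | decide
          | (simp_all [G.adj_comm] <;> decide)

lemma aalpha_mulVec {n : ℕ} (G : SimpleGraph (Fin n)) (α : ℝ) (y : Fin n → ℝ) (v : Fin n) :
    letI := Classical.decRel G.Adj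
    (Aalpha G α).mulVec y v
      = α * (G.degree v) * y v + (1 - α) * ∑ u ∈ G.neighborFinset v, y u := by
  letI := Classical.decRel G.Adj
  rw [Aalpha, add_mulVec, smul_mulVec, smul_mulVec]
  simp [mulVec_diagonal, adjMatrix_mulVec_apply, mul_assoc]

theorem stmt12 {n : ℕ} (G : SimpleGraph (Fin n)) (hconn : G.Connected)
    (hth : IsThreshold G)
    (hsort : ∀ i j : Fin n, i ≤ j → deg G j ≤ deg G i)
    (α : ℝ) (hα0 : 0 ≤ α) (hα1 : α < 1)
    (ρ : ℝ) (y : Fin n → ℝ) (hy : ∀ v, 0 < y v)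
    (hev : (Aalpha G α).mulVec y = ρ • y)
    (hmax : IsMaxEigenvalue (Aalpha G α) ρ) :
    (∀ i j : Fin n, i ≤ j → y j ≤ y i) ∧
    (∀ i j : Fin n, deg G i = deg G j → y i = y j) := by
  letI := Classical.decRel G.Adj
  have heq : ∀ v, α * (G.degree v) * y v
      + (1 - α) * ∑ u ∈ G.neighborFinset v, y u = ρ * y v := by
    intro v
    have h := congrFun hev v
    rw [aalpha_mulVec] at h
    simpa using h
  have hρ : ∀ v w : Fin n, v ≠ w → α * (G.degree v) < ρ := by
    intro v w hvw
    obtain ⟨u, hu⟩ : ∃ u, G.Adj v u := by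
      obtain ⟨p⟩ := hconn.preconnected v w
      cases p with
      | nil => exact absurd rfl hvw
      | cons h _ => exact ⟨_, h⟩
    have hne : (G.neighborFinset v).Nonempty := ⟨u, (mem_neighborFinset G v u).mpr hu⟩
    have hsum : 0 < ∑ u ∈ G.neighborFinset v, y u :=
      Finset.sum_pos (fun u _ => hy u) hne
    have h1 := heq v
    nlinarith [hy v, mul_pos (sub_pos.mpr hα1) hsum]
  have nested : ∀ i j : Fin n, G.degree j ≤ G.degree i →
      (G.neighborFinset j).erase i ⊆ (G.neighborFinset i).erase j := by
    intro i j hdeg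
    have hcard : ((G.neighborFinset j).erase i).card ≤ ((G.neighborFinset i).erase j).card := by
      by_cases hadj : G.Adj i j
      · rw [Finset.card_erase_of_mem ((mem_neighborFinset G i j).mpr hadj),
            Finset.card_erase_of_mem ((mem_neighborFinset G j i).mpr (G.adj_symm hadj))]
        simp only [card_neighborFinset_eq_degree]
        omega
      · rw [Finset.erase_eq_of_notMem (fun h => hadj ((mem_neighborFinset G i j).mp h)),
            Finset.erase_eq_of_notMem (fun h => hadj (G.adj_symm ((mem_neighborFinset G j i).mp h)))]
        simpa [card_neighborFinset_eq_degree] using hdeg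
    rcases comparable G hth i j with h | h
    · have hsub : (G.neighborFinset i).erase j ⊆ (G.neighborFinset j).erase i := by
        intro k hk
        simp only [Finset.mem_erase, mem_neighborFinset] at hk ⊢
        exact ⟨fun hki => G.irrefl (hki ▸ hk.2), h k hk.2 hk.1⟩
      rw [Finset.eq_of_subset_of_card_le hsub hcard]
    · intro k hk
      simp only [Finset.mem_erase, mem_neighborFinset] at hk ⊢
      exact ⟨fun hkj => G.irrefl (hkj ▸ hk.2), h k hk.2 hk.1⟩
  have key : ∀ i j : Fin n, deg G j ≤ deg G i → y j ≤ y i := by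
    intro i j hdeg0
    rcases eq_or_ne i j with rfl | hij
    · exact le_refl _
    have hdeg : G.degree j ≤ G.degree i := hdeg0
    have hρj : α * (G.degree j) < ρ := hρ j i hij.symm
    have hsub := nested i j hdeg
    have hsum : ∑ u ∈ (G.neighborFinset j).erase i, y u
        ≤ ∑ u ∈ (G.neighborFinset i).erase j, y u :=
      Finset.sum_le_sum_of_subset_of_nonneg hsub (fun u _ _ => (hy u).le)
    have hEi := heq i
    have hEj := heq j
    have hdR : (G.degree j : ℝ) ≤ (G.degree i : ℝ) := by exact_mod_cast hdeg
    by_contra hcon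
    push_neg at hcon
    by_cases hadj : G.Adj i j
    · have e1 : y j + ∑ u ∈ (G.neighborFinset i).erase j, y u
          = ∑ u ∈ G.neighborFinset i, y u :=
        Finset.add_sum_erase _ _ ((mem_neighborFinset G i j).mpr hadj)
      have e2 : y i + ∑ u ∈ (G.neighborFinset j).erase i, y u
          = ∑ u ∈ G.neighborFinset j, y u :=
        Finset.add_sum_erase _ _ ((mem_neighborFinset G j i).mpr (G.adj_symm hadj))
      nlinarith [mul_pos (sub_pos.mpr hρj) (sub_pos.mpr hcon),
        mul_nonneg (mul_nonneg hα0 (sub_nonneg.mpr hdR)) (hy i).le,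
        mul_nonneg (sub_pos.mpr hα1).le (sub_nonneg.mpr hsum),
        mul_pos (sub_pos.mpr hα1) (sub_pos.mpr hcon)]
    · have e1 : (G.neighborFinset i).erase j = G.neighborFinset i :=
        Finset.erase_eq_of_notMem (fun h => hadj ((mem_neighborFinset G i j).mp h))
      have e2 : (G.neighborFinset j).erase i = G.neighborFinset j :=
        Finset.erase_eq_of_notMem (fun h => hadj (G.adj_symm ((mem_neighborFinset G j i).mp h)))
      rw [e1, e2] at hsum
      nlinarith [mul_pos (sub_pos.mpr hρj) (sub_pos.mpr hcon),
        mul_nonneg (mul_nonneg hα0 (sub_nonneg.mpr hdR)) (hy i).le,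
        mul_nonneg (sub_pos.mpr hα1).le (sub_nonneg.mpr hsum)]
  exact ⟨fun i j h => key i j (hsort i j h),
    fun i j h => le_antisymm (key j i h.le) (key i j h.ge)⟩
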